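/- Let n ≥ 1 and d ≥ 1 be integers and let x_1, …, x_n ∈ ℝ^d. Every eigenvalue λ of the gradient-enhanced Gaussian kernel matrix K̃∇ built from x_1,…,x_n satisfies λ ≤ 1 + u_G(n,d), where u_G(n,d) = (n−1)·((1+√(1+4d))/2)·exp(−(1+2d−√(1+4d))/(4d)). -/

import Mathlib

open scoped BigOperators

/-- The gradient-enhanced Gaussian kernel matrix (with unit hyperparameters) built
from points `x_1, …, x_n ∈ ℝ^d`.  It is indexed by pairs `(p, a)` where `p = none`
is the function-value block and `p = some j` is the block of derivatives in the
`j`-th coordinate. -/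
noncomputable def Kgrad {n d : ℕ} (x : Fin n → Fin d → ℝ) :
    Matrix (Option (Fin d) × Fin n) (Option (Fin d) × Fin n) ℝ :=
  fun pa qi =>
    let a := pa.2
    let i := qi.2
    let k : ℝ := Real.exp (-(∑ l, (x a l - x i l) ^ 2) / 2)
    match pa.1, qi.1 with
    | none, none => k
    | none, some j => (x a j - x i j) * k
    | some p, none => -(x a p - x i p) * k
    | some p, some j =>
        ((if p = j then (1 : ℝ) else 0) - (x a p - x i p) * (x a j - x i j)) * k

/-- Upper bound `u_G(n,d)`. -/
noncomputable def uG (n d : ℕ) : ℝ :=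
  ((n : ℝ) - 1) * ((1 + Real.sqrt (1 + 4 * (d : ℝ))) / 2) *
    Real.exp (-(1 + 2 * (d : ℝ) - Real.sqrt (1 + 4 * (d : ℝ))) / (4 * (d : ℝ)))


section Aux
open Real Finset

noncomputable def cB (d : ℕ) : ℝ :=
  ((1 + Real.sqrt (1 + 4 * (d : ℝ))) / 2) *
    Real.exp (-(1 + 2 * (d : ℝ) - Real.sqrt (1 + 4 * (d : ℝ))) / (4 * (d : ℝ)))

lemma key1 (d : ℕ) (hd : 1 ≤ d) (r : ℝ) (hr : 0 ≤ r) :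
    (1 + Real.sqrt d * r) * Real.exp (-(r ^ 2) / 2) ≤ cB d := by
  have hd1 : (1 : ℝ) ≤ (d : ℝ) := by exact_mod_cast hd
  set s := Real.sqrt d with hsdef
  set m := Real.sqrt (1 + 4 * (d : ℝ)) with hmdef
  have hs : s ^ 2 = d := Real.sq_sqrt (by linarith)
  have hs0 : 0 < s := Real.sqrt_pos.2 (by linarith)
  have hm : m ^ 2 = 1 + 4 * d := Real.sq_sqrt (by linarith)
  have hm1 : 1 ≤ m := by
    nlinarith [Real.sqrt_nonneg (1 + 4*(d:ℝ))]
  set rs : ℝ := (m - 1) / (2 * s) with hrsdef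
  have hrs : 2 * s * rs = m - 1 := by
    rw [hrsdef]; field_simp
  have h5 : (1 + m) * rs = 2 * s := by
    have h2s : (2:ℝ) * s ≠ 0 := by positivity
    rw [hrsdef, mul_div_assoc', div_eq_iff h2s]
    linear_combination hm - 4*hs
  have h8 : (1 + m) * rs ^ 2 = m - 1 := by
    linear_combination rs * h5 + hrs
  have step1 : ((1 + m) / 2) * (1 + (r ^ 2 - rs ^ 2) / 2) - (1 + s * r) =
      ((1 + m) / 4) * (r - rs) ^ 2 := by
    linear_combination (r/2) * h5 - (1/2) * h8
  have hexp : 1 + (r ^ 2 - rs ^ 2) / 2 ≤ Real.exp ((r ^ 2 - rs ^ 2) / 2) :=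
    by linarith [Real.add_one_le_exp ((r ^ 2 - rs ^ 2) / 2)]
  have step2 : 1 + s * r ≤ ((1 + m) / 2) * Real.exp ((r ^ 2 - rs ^ 2) / 2) := by
    nlinarith [sq_nonneg (r - rs)]
  have hrs2 : -(rs ^ 2) / 2 = -(1 + 2 * (d:ℝ) - m) / (4 * (d:ℝ)) := by
    have h4 : 4 * (d:ℝ) * rs ^ 2 = (m - 1) ^ 2 := by
      have h := hrs
      nlinarith [hrs, hs]
    rw [div_eq_div_iff (by norm_num) (by positivity)]
    linear_combination -h4 - hm
  have hfinal : (1 + s * r) * Real.exp (-(r ^ 2) / 2) ≤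
      ((1 + m) / 2) * Real.exp (-(rs ^ 2) / 2) := by
    have h1 : (1 + s * r) * Real.exp (-(r ^ 2) / 2) ≤
        ((1 + m) / 2) * Real.exp ((r ^ 2 - rs ^ 2) / 2) * Real.exp (-(r ^ 2) / 2) :=
      mul_le_mul_of_nonneg_right step2 (Real.exp_nonneg _)
    calc (1 + s * r) * Real.exp (-(r ^ 2) / 2) ≤
        ((1 + m) / 2) * Real.exp ((r ^ 2 - rs ^ 2) / 2) * Real.exp (-(r ^ 2) / 2) := h1
      _ = ((1 + m) / 2) * Real.exp (-(rs ^ 2) / 2) := by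
          rw [mul_assoc, ← Real.exp_add]; ring_nf
  rw [cB, ← hmdef, ← hrs2]
  exact hfinal

lemma l1l2 {ι : Type*} (s : Finset ι) (f : ι → ℝ) :
    ∑ j ∈ s, |f j| ≤ Real.sqrt s.card * Real.sqrt (∑ j ∈ s, f j ^ 2) := by
  have h := sq_sum_le_card_mul_sum_sq (s := s) (f := fun j => |f j|)
  have h2 : ∑ j ∈ s, |f j| ^ 2 = ∑ j ∈ s, f j ^ 2 :=
    Finset.sum_congr rfl fun j _ => sq_abs _
  rw [h2] at h
  have h0 : (0:ℝ) ≤ ∑ j ∈ s, |f j| := Finset.sum_nonneg fun j _ => abs_nonneg _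
  calc ∑ j ∈ s, |f j| = Real.sqrt ((∑ j ∈ s, |f j|) ^ 2) := (Real.sqrt_sq h0).symm
    _ ≤ Real.sqrt ((s.card : ℝ) * ∑ j ∈ s, f j ^ 2) := Real.sqrt_le_sqrt h
    _ = Real.sqrt s.card * Real.sqrt (∑ j ∈ s, f j ^ 2) := Real.sqrt_mul (by positivity) _

lemma caseA (d : ℕ) (hd : 1 ≤ d) (t w : ℝ) (ht0 : 0 ≤ t) (ht1 : t ≤ 1) (hw : 0 ≤ w) :
    t * (1 - t) + Real.sqrt ((d:ℝ) - 1) * t * w ≤ Real.sqrt d * Real.sqrt (t^2 + w^2) := by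
  have hd1 : (1:ℝ) ≤ (d:ℝ) := by exact_mod_cast hd
  set b := Real.sqrt ((d:ℝ) - 1) with hbdef
  have hb : b ^ 2 = (d:ℝ) - 1 := Real.sq_sqrt (by linarith)
  have hb0 : 0 ≤ b := Real.sqrt_nonneg _
  rw [← Real.sqrt_mul (by positivity)]
  apply Real.le_sqrt_of_sq_le
  have cs : (t*(1-t)+b*t*w)^2 ≤ ((1-t)^2 + b^2*t^2)*(t^2+w^2) := by
    nlinarith [sq_nonneg ((1-t)*w - b*t*t)]
  have h1t : (0:ℝ) ≤ 1 - t^2 := by nlinarith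
  have hq : (1-t)^2 + b^2*t^2 ≤ (d:ℝ) := by
    nlinarith [mul_nonneg (sub_nonneg.2 hd1) h1t, mul_nonneg ht0 (by linarith : (0:ℝ) ≤ 2 - t)]
  calc (t*(1-t)+b*t*w)^2 ≤ ((1-t)^2 + b^2*t^2)*(t^2+w^2) := cs
    _ ≤ (d:ℝ)*(t^2+w^2) := mul_le_mul_of_nonneg_right hq (by positivity)

lemma caseB (d : ℕ) (hd : 1 ≤ d) (t w : ℝ) (ht1 : 1 ≤ t) (hw : 0 ≤ w) :
    t^2 + t - 1 + Real.sqrt ((d:ℝ) - 1) * t * w ≤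
      (1 + Real.sqrt d * w) * Real.exp (t^2 / 2) := by
  have hd1 : (1:ℝ) ≤ (d:ℝ) := by exact_mod_cast hd
  have ht0 : (0:ℝ) ≤ t := by linarith
  have hb : Real.sqrt ((d:ℝ) - 1) ≤ Real.sqrt d := Real.sqrt_le_sqrt (by linarith)
  have hpoly : ∑ i ∈ Finset.range 4, (t^2/2) ^ i / (Nat.factorial i) ≤ Real.exp (t^2/2) :=
    Real.sum_le_exp_of_nonneg (by positivity) 4
  have hsum : ∑ i ∈ Finset.range 4, (t^2/2) ^ i / (Nat.factorial i)
      = 1 + t^2/2 + t^4/8 + t^6/48 := by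
    simp [Finset.sum_range_succ, Nat.factorial]
    ring
  rw [hsum] at hpoly
  have hA : t^2 + t - 1 ≤ Real.exp (t^2/2) := by
    nlinarith [sq_nonneg (t-1), sq_nonneg (t^2-2), sq_nonneg (t-2), sq_nonneg (t^2-t), mul_nonneg (sub_nonneg.2 ht1) (sq_nonneg (t-1)), mul_nonneg (mul_nonneg (sub_nonneg.2 ht1) (sub_nonneg.2 ht1)) (sq_nonneg (t-1)), sq_nonneg (t^3 - 2*t), sq_nonneg (t^2 - 3)]
  have ht : t ≤ Real.exp (t^2/2) := by
    nlinarith [Real.add_one_le_exp (t^2/2), sq_nonneg (t-1)]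
  have hB : Real.sqrt ((d:ℝ)-1) * t ≤ Real.sqrt d * Real.exp (t^2/2) :=
    mul_le_mul hb ht ht0 (Real.sqrt_nonneg _)
  have := mul_le_mul_of_nonneg_right hB hw
  nlinarith [this, hA]

lemma rowNone (d : ℕ) (hd : 1 ≤ d) (δ : Fin d → ℝ) :
    (1 + ∑ j, |δ j|) * Real.exp (-(∑ l, δ l ^ 2) / 2) ≤ cB d := by
  set r := Real.sqrt (∑ l, δ l ^ 2) with hrdef
  have hr0 : 0 ≤ r := Real.sqrt_nonneg _
  have hr2 : r ^ 2 = ∑ l, δ l ^ 2 := Real.sq_sqrt (by positivity)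
  have hS : ∑ j, |δ j| ≤ Real.sqrt d * r := by
    have := l1l2 Finset.univ δ
    simpa [Finset.card_univ] using this
  calc (1 + ∑ j, |δ j|) * Real.exp (-(∑ l, δ l ^ 2) / 2)
      ≤ (1 + Real.sqrt d * r) * Real.exp (-(∑ l, δ l ^ 2) / 2) :=
        mul_le_mul_of_nonneg_right (by linarith) (Real.exp_nonneg _)
    _ = (1 + Real.sqrt d * r) * Real.exp (-(r ^ 2) / 2) := by rw [hr2]
    _ ≤ cB d := key1 d hd r hr0

lemma rowSome (d : ℕ) (hd : 1 ≤ d) (δ : Fin d → ℝ) (p : Fin d) :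
    (|δ p| + ∑ j, |(if p = j then (1:ℝ) else 0) - δ p * δ j|) *
      Real.exp (-(∑ l, δ l ^ 2) / 2) ≤ cB d := by
  have hd1 : (1:ℝ) ≤ (d:ℝ) := by exact_mod_cast hd
  set t := |δ p| with htdef
  have ht0 : 0 ≤ t := abs_nonneg _
  set Q := ∑ j ∈ Finset.univ.erase p, δ j ^ 2 with hQdef
  have hQ0 : 0 ≤ Q := Finset.sum_nonneg fun _ _ => sq_nonneg _
  have hsplit : ∑ l, δ l ^ 2 = t ^ 2 + Q := by
    rw [htdef, sq_abs]
    exact (Finset.add_sum_erase _ _ (Finset.mem_univ p)).symm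
  set w := Real.sqrt Q with hwdef
  have hw0 : 0 ≤ w := Real.sqrt_nonneg _
  have hw2 : w ^ 2 = Q := Real.sq_sqrt hQ0
  have hpp : δ p * δ p = t ^ 2 := by rw [htdef, sq_abs]; ring
  have hsum : ∑ j, |(if p = j then (1:ℝ) else 0) - δ p * δ j|
      = |1 - t ^ 2| + t * ∑ j ∈ Finset.univ.erase p, |δ j| := by
    rw [← Finset.add_sum_erase _ _ (Finset.mem_univ p)]
    rw [if_pos rfl, hpp, Finset.mul_sum]
    congr 1
    refine Finset.sum_congr rfl fun j hj => ?_
    have hpj : p ≠ j := (Finset.ne_of_mem_erase hj).symm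
    rw [if_neg hpj, zero_sub, abs_neg, abs_mul, ← htdef]
  have hS' : ∑ j ∈ Finset.univ.erase p, |δ j| ≤ Real.sqrt ((d:ℝ) - 1) * w := by
    have h := l1l2 (Finset.univ.erase p) δ
    have hcard : ((Finset.univ.erase p).card : ℝ) = (d:ℝ) - 1 := by
      rw [Finset.card_erase_of_mem (Finset.mem_univ p), Finset.card_univ, Fintype.card_fin]
      rw [Nat.cast_sub hd]; norm_num
    rwa [hcard, ← hQdef, ← hwdef] at h
  have hE : |δ p| + ∑ j, |(if p = j then (1:ℝ) else 0) - δ p * δ j|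
      ≤ t + |1 - t ^ 2| + t * (Real.sqrt ((d:ℝ) - 1) * w) := by
    rw [hsum, ← htdef]
    have := mul_le_mul_of_nonneg_left hS' ht0
    linarith
  have hexp0 : (0:ℝ) < Real.exp (-(∑ l, δ l ^ 2) / 2) := Real.exp_pos _
  rcases le_total t 1 with hcase | hcase
  · -- t ≤ 1
    have habs : |1 - t ^ 2| = 1 - t ^ 2 := abs_of_nonneg (by nlinarith)
    set r := Real.sqrt (∑ l, δ l ^ 2) with hrdef
    have hr0 : 0 ≤ r := Real.sqrt_nonneg _
    have hr2 : r ^ 2 = ∑ l, δ l ^ 2 := Real.sq_sqrt (by positivity)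
    have hrw : r = Real.sqrt (t ^ 2 + w ^ 2) := by rw [hrdef, hsplit, hw2]
    have hCS : t * (1 - t) + Real.sqrt ((d:ℝ) - 1) * t * w ≤ Real.sqrt d * r := by
      rw [hrw]; exact caseA d hd t w ht0 hcase hw0
    have hE2 : |δ p| + ∑ j, |(if p = j then (1:ℝ) else 0) - δ p * δ j| ≤
        1 + Real.sqrt d * r := by
      have : t + |1 - t ^ 2| + t * (Real.sqrt ((d:ℝ) - 1) * w)
          = 1 + (t * (1 - t) + Real.sqrt ((d:ℝ) - 1) * t * w) := by rw [habs]; ring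
      linarith [hE, this ▸ hE]
    calc (|δ p| + ∑ j, |(if p = j then (1:ℝ) else 0) - δ p * δ j|) *
          Real.exp (-(∑ l, δ l ^ 2) / 2)
        ≤ (1 + Real.sqrt d * r) * Real.exp (-(∑ l, δ l ^ 2) / 2) :=
          mul_le_mul_of_nonneg_right hE2 hexp0.le
      _ = (1 + Real.sqrt d * r) * Real.exp (-(r ^ 2) / 2) := by rw [hr2]
      _ ≤ cB d := key1 d hd r hr0
  · -- 1 ≤ t
    have habs : |1 - t ^ 2| = t ^ 2 - 1 := by
      rw [abs_of_nonpos (by nlinarith)]; ring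
    have hE2 : |δ p| + ∑ j, |(if p = j then (1:ℝ) else 0) - δ p * δ j| ≤
        t ^ 2 + t - 1 + Real.sqrt ((d:ℝ) - 1) * t * w := by
      rw [habs] at hE; linarith [hE]
    have hcb := caseB d hd t w hcase hw0
    have hEexp : |δ p| + ∑ j, |(if p = j then (1:ℝ) else 0) - δ p * δ j| ≤
        (1 + Real.sqrt d * w) * Real.exp (t ^ 2 / 2) := le_trans hE2 hcb
    have hfactor : Real.exp (-(∑ l, δ l ^ 2) / 2)
        = Real.exp (-(t ^ 2) / 2) * Real.exp (-(w ^ 2) / 2) := by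
      rw [← Real.exp_add, hsplit, hw2]; ring_nf
    calc (|δ p| + ∑ j, |(if p = j then (1:ℝ) else 0) - δ p * δ j|) *
          Real.exp (-(∑ l, δ l ^ 2) / 2)
        ≤ ((1 + Real.sqrt d * w) * Real.exp (t ^ 2 / 2)) *
            Real.exp (-(∑ l, δ l ^ 2) / 2) :=
          mul_le_mul_of_nonneg_right hEexp hexp0.le
      _ = (1 + Real.sqrt d * w) * Real.exp (-(w ^ 2) / 2) := by
          rw [hfactor, ← mul_assoc]
          rw [mul_assoc ((1 + Real.sqrt d * w)) (Real.exp (t ^ 2 / 2)) _, ← Real.exp_add]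
          ring_nf
          rw [Real.exp_zero]
          ring
      _ ≤ cB d := key1 d hd w hw0

lemma colSum {n d : ℕ} (hd : 1 ≤ d) (x : Fin n → Fin d → ℝ)
    (k : Option (Fin d) × Fin n) (i : Fin n) :
    ∑ q : Option (Fin d), ‖Kgrad x k (q, i)‖ ≤ cB d := by
  obtain ⟨op, a⟩ := k
  set δ : Fin d → ℝ := fun j => x a j - x i j with hδ
  set kv : ℝ := Real.exp (-(∑ l, δ l ^ 2) / 2) with hkv
  have hkv0 : 0 < kv := Real.exp_pos _
  rw [Fintype.sum_option]
  cases op with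
  | none =>
      have h1 : ‖Kgrad x (none, a) (none, i)‖ = kv := by
        simp [Kgrad, hkv, abs_of_pos (Real.exp_pos _)]
        rfl
      have h2 : ∀ j : Fin d, ‖Kgrad x (none, a) (some j, i)‖ = |δ j| * kv := by
        intro j
        simp [Kgrad, hkv, abs_mul, abs_of_pos (Real.exp_pos _)]
        rfl
      calc ‖Kgrad x (none, a) (none, i)‖ + ∑ j, ‖Kgrad x (none, a) (some j, i)‖
          = (1 + ∑ j, |δ j|) * kv := by
            rw [h1]; simp_rw [h2]; rw [← Finset.sum_mul]; ring
        _ ≤ cB d := rowNone d hd δ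
  | some p =>
      have h1 : ‖Kgrad x (some p, a) (none, i)‖ = |δ p| * kv := by
        simp [Kgrad, hkv, abs_mul, abs_of_pos (Real.exp_pos _)]
        rw [abs_sub_comm]
      have h2 : ∀ j : Fin d, ‖Kgrad x (some p, a) (some j, i)‖
          = |(if p = j then (1:ℝ) else 0) - δ p * δ j| * kv := by
        intro j
        simp [Kgrad, hkv, abs_mul, abs_of_pos (Real.exp_pos _)]
        rfl
      calc ‖Kgrad x (some p, a) (none, i)‖ + ∑ j, ‖Kgrad x (some p, a) (some j, i)‖
          = (|δ p| + ∑ j, |(if p = j then (1:ℝ) else 0) - δ p * δ j|) * kv := by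
            rw [h1]; simp_rw [h2]; rw [← Finset.sum_mul]; ring
        _ ≤ cB d := rowSome d hd δ p

/-- Every eigenvalue `λ` of the gradient-enhanced Gaussian kernel matrix `K̃∇`
satisfies `λ ≤ 1 + u_G(n,d)`. -/
theorem stmt_17 {n d : ℕ} (hn : 1 ≤ n) (hd : 1 ≤ d)
    (x : Fin n → Fin d → ℝ) (lam : ℝ) (hlam : lam ∈ spectrum ℝ (Kgrad x)) :
    lam ≤ 1 + uG n d := by
  set A := Kgrad x with hA
  have h1 : lam ∈ spectrum ℝ (Matrix.toLin' A) := by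
    rw [show Matrix.toLin' A = Matrix.toLinAlgEquiv' A from rfl,
      AlgEquiv.spectrum_eq Matrix.toLinAlgEquiv' A]
    exact hlam
  obtain ⟨k, hk⟩ := eigenvalue_mem_ball (Module.End.hasEigenvalue_iff_mem_spectrum.mpr h1)
  obtain ⟨op, a⟩ := k
  have hdiag : A (op, a) (op, a) = 1 := by
    cases op <;> simp [hA, Kgrad]
  rw [hdiag, Metric.mem_closedBall, Real.dist_eq] at hk
  have hlam1 : lam - 1 ≤ ∑ j ∈ Finset.univ.erase (op, a), ‖A (op, a) j‖ :=
    le_trans (le_abs_self _) hk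
  -- bound the off-diagonal row sum
  set g : Option (Fin d) × Fin n → ℝ :=
    fun qi => if qi.2 = a then 0 else ‖A (op, a) qi‖ with hg
  have hg0 : ∀ qi, 0 ≤ g qi := fun qi => by
    by_cases h : qi.2 = a <;> simp [hg, h]
  have hstep : ∀ qi ∈ Finset.univ.erase (op, a), ‖A (op, a) qi‖ ≤ g qi := by
    rintro ⟨q, i⟩ hqi
    by_cases hia : i = a
    · subst hia
      have hq : q ≠ op := by
        intro h; subst h; exact (Finset.ne_of_mem_erase hqi) rfl
      have hz : A (op, i) (q, i) = 0 := by
        cases op with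
        | none =>
            cases q with
            | none => exact absurd rfl hq
            | some j => simp [hA, Kgrad]
        | some p =>
            cases q with
            | none => simp [hA, Kgrad]
            | some j =>
                have hpj : p ≠ j := by rintro rfl; exact hq rfl
                simp [hA, Kgrad, hpj]
      simp [hg, hz]
    · simp [hg, hia]
  have hbound : ∑ j ∈ Finset.univ.erase (op, a), ‖A (op, a) j‖ ≤ ((n:ℝ) - 1) * cB d := by
    calc ∑ j ∈ Finset.univ.erase (op, a), ‖A (op, a) j‖
        ≤ ∑ j ∈ Finset.univ.erase (op, a), g j := Finset.sum_le_sum hstep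
      _ ≤ ∑ j : Option (Fin d) × Fin n, g j :=
          Finset.sum_le_sum_of_subset_of_nonneg (Finset.subset_univ _)
            (fun qi _ _ => hg0 qi)
      _ = ∑ i : Fin n, ∑ q : Option (Fin d), g (q, i) := by
          rw [Fintype.sum_prod_type]; exact Finset.sum_comm
      _ ≤ ∑ i : Fin n, (if i = a then 0 else cB d) := by
          refine Finset.sum_le_sum fun i _ => ?_
          by_cases hia : i = a
          · simp [hia, hg]
          · simp only [hia, if_false]
            have : ∀ q : Option (Fin d), g (q, i) = ‖A (op, a) (q, i)‖ := by
              intro q; rw [hg]; simp [hia]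
            simp_rw [this]
            exact colSum hd x (op, a) i
      _ = ((n:ℝ) - 1) * cB d := by
          rw [← Finset.add_sum_erase _ _ (Finset.mem_univ a), if_pos rfl, zero_add]
          rw [Finset.sum_congr rfl (fun i hi => if_neg (Finset.ne_of_mem_erase hi)),
            Finset.sum_const, Finset.card_erase_of_mem (Finset.mem_univ a),
            Finset.card_univ, Fintype.card_fin, nsmul_eq_mul, Nat.cast_sub hn]
          norm_num
  have huG : uG n d = ((n:ℝ) - 1) * cB d := by
    rw [uG, cB, mul_assoc]
  linarith [hbound, hlam1, huG ▸ hbound]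

end Aux
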